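/- Let M be an irreducible unitary projective co-representation of G with factor system ω satisfying ω(e,e) = 1, whose restriction to H is unitarily equivalent to a direct sum of two mutually inequivalent irreducible projective representations of H (the type-III, complex case, norm R = 2). Then there exists an irreducible projective representation D of H (of dimension m, with factor system ω restricted to H×H) such that M is equivalent to the co-representation U in standard form: U(h) = diag(D(h), conj(E(h))) for all h ∈ H, and U(T0) = [[0, ω(T0,T0)·D(T0²)],[I_m, 0]] in m×m block form, where E(h) := conj( ω(h,T0) / ω(T0, T0^{−1}·h·T0) )·D(T0^{−1}·h·T0) and conj denotes (entrywise) complex conjugation. -/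

import Mathlib

open Matrix Complex BigOperators

noncomputable section

def mconj {ι : Type*} (u : ℤˣ) (X : Matrix ι ι ℂ) : Matrix ι ι ℂ :=
  if u = 1 then X else X.map (starRingEnd ℂ)

def vconj {ι : Type*} (u : ℤˣ) (v : ι → ℂ) : ι → ℂ :=
  if u = 1 then v else star v

structure IsCoRep {G : Type*} [Group G] {ι : Type*} [Fintype ι] [DecidableEq ι] (s : G →* ℤˣ)
    (M : G → Matrix ι ι ℂ) (ω : G → G → ℂ) : Prop where
  isUnit : ∀ g, IsUnit (M g)
  omega_norm : ∀ g1 g2, ‖ω g1 g2‖ = 1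
  mul_eq : ∀ g1 g2, M g1 * mconj (s g1) (M g2) = ω g1 g2 • M (g1 * g2)

structure IsUnitaryCoRep {G : Type*} [Group G] {ι : Type*} [Fintype ι] [DecidableEq ι]
    (s : G →* ℤˣ) (M : G → Matrix ι ι ℂ) (ω : G → G → ℂ) extends IsCoRep s M ω : Prop where
  unitary : ∀ g, M g ∈ Matrix.unitaryGroup ι ℂ

def rho {G : Type*} [Group G] {ι : Type*} [Fintype ι] (s : G →* ℤˣ) (M : G → Matrix ι ι ℂ)
    (g : G) (v : ι → ℂ) : ι → ℂ :=
  (M g).mulVec (vconj (s g) v)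

def InvariantSub {G : Type*} [Group G] {ι : Type*} [Fintype ι] (s : G →* ℤˣ)
    (M : G → Matrix ι ι ℂ) (W : Submodule ℂ (ι → ℂ)) : Prop :=
  ∀ g : G, ∀ v ∈ W, rho s M g v ∈ W

def IrreducibleCoRep {G : Type*} [Group G] {ι : Type*} [Fintype ι] (s : G →* ℤˣ)
    (M : G → Matrix ι ι ℂ) : Prop :=
  ∀ W : Submodule ℂ (ι → ℂ), InvariantSub s M W → W = ⊥ ∨ W = ⊤

def IsProjRepOnH {G : Type*} [Group G] {ι : Type*} [Fintype ι] [DecidableEq ι] (s : G →* ℤˣ)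
    (D : G → Matrix ι ι ℂ) (ω : G → G → ℂ) : Prop :=
  (∀ h, s h = 1 → D h ∈ Matrix.unitaryGroup ι ℂ) ∧
  ∀ h1 h2, s h1 = 1 → s h2 = 1 → D h1 * D h2 = ω h1 h2 • D (h1 * h2)

def IrreducibleOnH {G : Type*} [Group G] {ι : Type*} [Fintype ι] (s : G →* ℤˣ)
    (D : G → Matrix ι ι ℂ) : Prop :=
  ∀ W : Submodule ℂ (ι → ℂ), (∀ h, s h = 1 → ∀ v ∈ W, (D h).mulVec v ∈ W) →
    W = ⊥ ∨ W = ⊤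

def UnitEquivOnH {G : Type*} [Group G] {ι : Type*} [Fintype ι] [DecidableEq ι] (s : G →* ℤˣ)
    (D1 D2 : G → Matrix ι ι ℂ) : Prop :=
  ∃ U ∈ Matrix.unitaryGroup ι ℂ, ∀ h, s h = 1 → D2 h = U * D1 h * star U

def CoRepEquiv {G : Type*} [Group G] {α β : Type*} [Fintype α] [DecidableEq α]
    [Fintype β] [DecidableEq β] (s : G →* ℤˣ)
    (M1 : G → Matrix α α ℂ) (M2 : G → Matrix β β ℂ) : Prop :=
  ∃ (e : α ≃ β) (S : Matrix β β ℂ), S ∈ Matrix.unitaryGroup β ℂ ∧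
    ∀ g, M2 g = S * (M1 g).submatrix e.symm e.symm * (mconj (s g) S)⁻¹

/-- The conjugate partner `E(h) = conj(ω(h,T0)/ω(T0,T0⁻¹hT0))·D(T0⁻¹hT0)` of a
projective representation `D` of `H`. -/
def Estd {G : Type*} [Group G] {ι : Type*} (ω : G → G → ℂ) (T0 : G)
    (D : G → Matrix ι ι ℂ) (h : G) : Matrix ι ι ℂ :=
  (starRingEnd ℂ) (ω h T0 / ω T0 (T0⁻¹ * h * T0)) • D (T0⁻¹ * h * T0)

/- ===================== auxiliary lemmas ===================== -/

set_option linter.unusedSectionVars false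
set_option linter.unnecessarySeqFocus false
set_option maxHeartbeats 1600000

section Aux
variable {ι : Type*} [Fintype ι] [DecidableEq ι]

lemma mconj_id (X : Matrix ι ι ℂ) : mconj 1 X = X := if_pos rfl

lemma mconj_neg (X : Matrix ι ι ℂ) : mconj (-1) X = X.map (starRingEnd ℂ) :=
  if_neg (by decide)

lemma mconj_one (u : ℤˣ) : mconj u (1 : Matrix ι ι ℂ) = 1 := by
  unfold mconj; split
  · rfl
  · ext i j
    by_cases h : i = j <;> simp [Matrix.map_apply, Matrix.one_apply, h]

lemma mconj_mul (u : ℤˣ) (X Y : Matrix ι ι ℂ) :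
    mconj u (X * Y) = mconj u X * mconj u Y := by
  unfold mconj; split
  · rfl
  · exact Matrix.map_mul

lemma mconj_mconj (u v : ℤˣ) (X : Matrix ι ι ℂ) :
    mconj u (mconj v X) = mconj (u * v) X := by
  unfold mconj
  rcases Int.units_eq_one_or u with hu | hu <;> rcases Int.units_eq_one_or v with hv | hv <;>
    subst hu <;> subst hv <;> simp <;>
  · ext i j; simp [Matrix.map_apply]

lemma mconj_star (u : ℤˣ) (X : Matrix ι ι ℂ) :
    mconj u (star X) = star (mconj u X) := by
  unfold mconj; split
  · rfl
  · ext i j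
    simp [Matrix.map_apply, Matrix.conjTranspose_apply]

lemma mconj_unitary {u : ℤˣ} {X : Matrix ι ι ℂ} (hX : X ∈ Matrix.unitaryGroup ι ℂ) :
    mconj u X ∈ Matrix.unitaryGroup ι ℂ := by
  rw [Matrix.mem_unitaryGroup_iff] at hX ⊢
  rw [← mconj_star, ← mconj_mul, hX, mconj_one]

lemma vconj_mulVec (u : ℤˣ) (X : Matrix ι ι ℂ) (v : ι → ℂ) :
    vconj u (X.mulVec v) = (mconj u X).mulVec (vconj u v) := by
  unfold vconj mconj; split
  · rfl
  · ext i
    simp [Matrix.mulVec, dotProduct, map_sum, Matrix.map_apply]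

lemma vconj_comp {κ : Type*} (u : ℤˣ) (v : ι → ℂ) (f : κ → ι) :
    vconj u (v ∘ f) = vconj u v ∘ f := by
  unfold vconj; split <;> rfl

lemma vconj_zero {κ : Type*} (u : ℤˣ) : vconj u (0 : κ → ℂ) = 0 := by
  unfold vconj; split
  · rfl
  · exact star_zero _

lemma matmap_one : (1 : Matrix ι ι ℂ).map (starRingEnd ℂ) = 1 := by
  ext i j
  by_cases h : i = j <;> simp [Matrix.map_apply, Matrix.one_apply, h]

lemma matmap_zero {κ : Type*} : (0 : Matrix ι κ ℂ).map (starRingEnd ℂ) = 0 := by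
  ext i j; simp

lemma self_mul_star_eq_zero {B : Matrix ι ι ℂ} (h : B * star B = 0) : B = 0 := by
  ext i j
  have h0 : (B * star B) i i = 0 := by rw [h]; rfl
  rw [Matrix.mul_apply] at h0
  have hterm : ∀ k, B i k * (star B) k i = ((Complex.normSq (B i k) : ℝ) : ℂ) := by
    intro k
    rw [Matrix.star_apply, Complex.star_def, Complex.mul_conj]
  rw [Finset.sum_congr rfl (fun k _ => hterm k)] at h0
  have h1 : (↑(∑ k, Complex.normSq (B i k)) : ℂ) = 0 := by push_cast; exact h0
  have h2 : ∑ k, Complex.normSq (B i k) = 0 := by exact_mod_cast h1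
  have h3 := (Finset.sum_eq_zero_iff_of_nonneg
    (fun k _ => Complex.normSq_nonneg (B i k))).mp h2 j (Finset.mem_univ j)
  exact Complex.normSq_eq_zero.mp h3

lemma star_mul_self_eq_zero {B : Matrix ι ι ℂ} (h : star B * B = 0) : B = 0 := by
  have : star B * star (star B) = 0 := by rwa [star_star]
  have := self_mul_star_eq_zero this
  calc B = star (star B) := (star_star B).symm
    _ = star 0 := by rw [this]
    _ = 0 := star_zero _

lemma mconj_isUnit {u : ℤˣ} {X : Matrix ι ι ℂ} (hX : IsUnit X) : IsUnit (mconj u X) := by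
  obtain ⟨Y, hY⟩ := hX.exists_right_inv
  have : mconj u X * mconj u Y = 1 := by rw [← mconj_mul, hY, mconj_one]
  exact Matrix.isUnit_iff_isUnit_det _ |>.2 (Matrix.isUnit_det_of_right_inverse this)

lemma unitary_isUnit {X : Matrix ι ι ℂ} (hX : X ∈ Matrix.unitaryGroup ι ℂ) : IsUnit X :=
  (Matrix.isUnit_iff_isUnit_det _).2
    (Matrix.isUnit_det_of_right_inverse (Matrix.mem_unitaryGroup_iff.mp hX))

lemma star_mconj_mul_self {u : ℤˣ} {X : Matrix ι ι ℂ} (hX : X ∈ Matrix.unitaryGroup ι ℂ) :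
    star (mconj u X) * mconj u X = 1 :=
  Matrix.mem_unitaryGroup_iff'.mp (mconj_unitary hX)

end Aux

section CoRepAux

variable {G : Type*} [Group G] {ι : Type*} [Fintype ι] [DecidableEq ι]

/-- Conjugating a unitary co-representation by a unitary matrix. -/
lemma corep_conj (s : G →* ℤˣ) (M : G → Matrix ι ι ℂ) (ω : G → G → ℂ)
    (hM : IsUnitaryCoRep s M ω) (S : Matrix ι ι ℂ) (hS : S ∈ Matrix.unitaryGroup ι ℂ) :
    IsUnitaryCoRep s (fun g => S * M g * star (mconj (s g) S)) ω := by
  constructor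
  · constructor
    · intro g
      exact ((unitary_isUnit hS).mul (hM.isUnit g)).mul (mconj_isUnit (unitary_isUnit hS)).star
    · exact hM.omega_norm
    · intro g1 g2
      have h1 : mconj (s g1) (S * M g2 * star (mconj (s g2) S))
          = mconj (s g1) S * mconj (s g1) (M g2) * star (mconj (s (g1 * g2)) S) := by
        rw [mconj_mul, mconj_mul, mconj_star, mconj_mconj, ← MonoidHom.map_mul]
      show S * M g1 * star (mconj (s g1) S) * mconj (s g1) (S * M g2 * star (mconj (s g2) S))
          = ω g1 g2 • (S * M (g1 * g2) * star (mconj (s (g1 * g2)) S))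
      rw [h1]
      calc S * M g1 * star (mconj (s g1) S) *
            (mconj (s g1) S * mconj (s g1) (M g2) * star (mconj (s (g1 * g2)) S))
          = S * (M g1 * ((star (mconj (s g1) S) * mconj (s g1) S) * mconj (s g1) (M g2))) *
            star (mconj (s (g1 * g2)) S) := by noncomm_ring
        _ = S * (M g1 * mconj (s g1) (M g2)) * star (mconj (s (g1 * g2)) S) := by
            rw [star_mconj_mul_self hS, one_mul]
        _ = ω g1 g2 • (S * M (g1 * g2) * star (mconj (s (g1 * g2)) S)) := by
            rw [hM.mul_eq g1 g2, Matrix.mul_smul, Matrix.smul_mul]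
  · intro g
    exact Submonoid.mul_mem _ (Submonoid.mul_mem _ hS (hM.unitary g))
      (Unitary.star_mem (mconj_unitary hS))

end CoRepAux

section CoRepAux2

variable {G : Type*} [Group G] {α β : Type*} [Fintype α] [DecidableEq α]
  [Fintype β] [DecidableEq β]

lemma mconj_submatrix (u : ℤˣ) (X : Matrix α α ℂ) (e : β → α) :
    mconj u (X.submatrix e e) = (mconj u X).submatrix e e := by
  unfold mconj; split <;> rfl

/-- Reindexing a unitary co-representation by an equivalence. -/
lemma corep_reindex (s : G →* ℤˣ) (M : G → Matrix α α ℂ) (ω : G → G → ℂ)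
    (hM : IsUnitaryCoRep s M ω) (e : β ≃ α) :
    IsUnitaryCoRep s (fun g => (M g).submatrix e e) ω := by
  constructor
  · constructor
    · intro g
      obtain ⟨Y, hY⟩ := (hM.isUnit g).exists_right_inv
      have : (M g).submatrix e e * Y.submatrix e e = 1 := by
        rw [Matrix.submatrix_mul_equiv, hY, Matrix.submatrix_one_equiv]
      exact (Matrix.isUnit_iff_isUnit_det _).2 (Matrix.isUnit_det_of_right_inverse this)
    · exact hM.omega_norm
    · intro g1 g2
      show (M g1).submatrix e e * mconj (s g1) ((M g2).submatrix e e)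
          = ω g1 g2 • (M (g1 * g2)).submatrix e e
      rw [mconj_submatrix, Matrix.submatrix_mul_equiv, hM.mul_eq g1 g2]
      rfl
  · intro g
    rw [Matrix.mem_unitaryGroup_iff']
    show star ((M g).submatrix e e) * (M g).submatrix e e = 1
    rw [Matrix.star_eq_conjTranspose, Matrix.conjTranspose_submatrix,
      ← Matrix.star_eq_conjTranspose, Matrix.submatrix_mul_equiv,
      Matrix.mem_unitaryGroup_iff'.mp (hM.unitary g), Matrix.submatrix_one_equiv]

/-- Transport of irreducibility along conjugation + reindexing. -/
lemma irr_transport (s : G →* ℤˣ) (M : G → Matrix α α ℂ)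
    (hirr : IrreducibleCoRep s M) (e : α ≃ β) (S : Matrix β β ℂ)
    (hS : S ∈ Matrix.unitaryGroup β ℂ) :
    IrreducibleCoRep s
      (fun g => S * (M g).submatrix e.symm e.symm * star (mconj (s g) S)) := by
  intro W hW
  set U : G → Matrix β β ℂ :=
    fun g => S * (M g).submatrix e.symm e.symm * star (mconj (s g) S) with hU
  set L : (α → ℂ) →ₗ[ℂ] (β → ℂ) :=
    (Matrix.mulVecLin S).comp (LinearMap.funLeft ℂ ℂ e.symm) with hL
  have hLsurj : Function.Surjective L := by
    intro w
    refine ⟨(star S).mulVec w ∘ e, ?_⟩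
    show S.mulVec ((star S).mulVec w ∘ e ∘ e.symm) = w
    have : (star S).mulVec w ∘ e ∘ e.symm = (star S).mulVec w := by
      funext i; simp
    rw [this, Matrix.mulVec_mulVec, Matrix.mem_unitaryGroup_iff.mp hS, Matrix.one_mulVec]
  have hcomm : ∀ g v, L (rho s M g v) = rho s U g (L v) := by
    intro g v
    show S.mulVec ((M g).mulVec (vconj (s g) v) ∘ e.symm)
        = (U g).mulVec (vconj (s g) (S.mulVec (v ∘ e.symm)))
    rw [vconj_mulVec, vconj_comp]
    rw [Matrix.mulVec_mulVec]
    have h2 : (U g) * mconj (s g) S = S * (M g).submatrix e.symm e.symm := by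
      rw [hU]
      calc S * (M g).submatrix e.symm e.symm * star (mconj (s g) S) * mconj (s g) S
          = S * (M g).submatrix e.symm e.symm * (star (mconj (s g) S) * mconj (s g) S) := by
            noncomm_ring
        _ = S * (M g).submatrix e.symm e.symm := by rw [star_mconj_mul_self hS, mul_one]
    rw [h2, ← Matrix.mulVec_mulVec, Matrix.submatrix_mulVec_equiv]
    have h3 : (vconj (s g) v ∘ ⇑e.symm) ∘ ⇑e.symm.symm = vconj (s g) v := by
      funext i; simp
    rw [h3]
  have hW' : InvariantSub s M (W.comap L) := by
    intro g v hv
    simp only [Submodule.mem_comap] at hv ⊢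
    rw [hcomm]
    exact hW g _ hv
  rcases hirr _ hW' with h | h
  · left
    rw [Submodule.eq_bot_iff]
    intro w hw
    obtain ⟨v, rfl⟩ := hLsurj w
    have : v ∈ W.comap L := hw
    rw [h] at this
    simp only [Submodule.mem_bot] at this
    rw [this, map_zero]
  · right
    rw [Submodule.eq_top_iff']
    intro w
    obtain ⟨v, rfl⟩ := hLsurj w
    have : v ∈ W.comap L := by rw [h]; trivial
    exact this

end CoRepAux2

section Schur
variable {G : Type*} [Group G] {ι : Type*} [Fintype ι] [DecidableEq ι]

lemma matrix_eq_zero_of_mulVec (X : Matrix ι ι ℂ) (h : ∀ v, X.mulVec v = 0) : X = 0 := by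
  ext i j
  have := congrFun (h (Pi.single j 1)) i
  simpa [Matrix.mulVec_single] using this

lemma matrix_isUnit_of_surjective (X : Matrix ι ι ℂ)
    (h : LinearMap.range (Matrix.toLin' X) = ⊤) : IsUnit X := by
  obtain ⟨g, hg⟩ := (Matrix.toLin' X).exists_rightInverse_of_surjective h
  have : X * LinearMap.toMatrix' g = 1 := by
    have := congrArg LinearMap.toMatrix' hg
    rwa [LinearMap.toMatrix'_comp, LinearMap.toMatrix'_toLin', LinearMap.toMatrix'_id] at this
  exact (Matrix.isUnit_iff_isUnit_det _).2 (Matrix.isUnit_det_of_right_inverse this)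

lemma schur_inv (s : G →* ℤˣ) (D E : G → Matrix ι ι ℂ) (hirr : IrreducibleOnH s D)
    (X : Matrix ι ι ℂ) (hX : ∀ h, s h = 1 → D h * X = X * E h) (hX0 : X ≠ 0) :
    IsUnit X := by
  set W := LinearMap.range (Matrix.toLin' X) with hW
  have hinv : ∀ h, s h = 1 → ∀ v ∈ W, (D h).mulVec v ∈ W := by
    intro h hh v hv
    obtain ⟨w, rfl⟩ := hv
    refine ⟨(E h).mulVec w, ?_⟩
    rw [Matrix.toLin'_apply, Matrix.toLin'_apply, Matrix.mulVec_mulVec,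
      Matrix.mulVec_mulVec, hX h hh]
  rcases hirr W hinv with h | h
  · exfalso
    apply hX0
    apply matrix_eq_zero_of_mulVec
    intro v
    have : Matrix.toLin' X v ∈ W := ⟨v, rfl⟩
    rw [h] at this
    simpa [Matrix.toLin'_apply] using this
  · exact matrix_isUnit_of_surjective X h

lemma schur_scalar (s : G →* ℤˣ) (D : G → Matrix ι ι ℂ) (hirr : IrreducibleOnH s D)
    (X : Matrix ι ι ℂ) (hX : ∀ h, s h = 1 → D h * X = X * D h) :
    ∃ c : ℂ, X = c • 1 := by
  rcases isEmpty_or_nonempty ι with he | hne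
  · exact ⟨0, by ext i j; exact (IsEmpty.false i).elim⟩
  · obtain ⟨c, hc⟩ := Module.End.exists_eigenvalue (Matrix.toLin' X)
    set W := Module.End.eigenspace (Matrix.toLin' X) c with hWdef
    have hinv : ∀ h, s h = 1 → ∀ v ∈ W, (D h).mulVec v ∈ W := by
      intro h hh v hv
      rw [hWdef, Module.End.mem_eigenspace_iff] at hv ⊢
      rw [Matrix.toLin'_apply] at hv ⊢
      rw [Matrix.mulVec_mulVec, ← hX h hh, ← Matrix.mulVec_mulVec, hv,
        Matrix.mulVec_smul]
    rcases hirr W hinv with h | h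
    · exact (hc h).elim
    · refine ⟨c, ?_⟩
      ext i j
      have hv : Pi.single j 1 ∈ W := by rw [h]; trivial
      rw [hWdef, Module.End.mem_eigenspace_iff, Matrix.toLin'_apply] at hv
      have := congrFun hv i
      simp only [Matrix.mulVec_single, Pi.smul_apply] at this
      simp only [Matrix.smul_apply, Matrix.one_apply]
      rw [MulOpposite.op_one, one_smul, Matrix.col_apply] at this
      rw [this]
      by_cases hij : i = j <;> simp [Pi.single_apply, hij, smul_eq_mul]

lemma intertwiner_star (s : G →* ℤˣ) (D1 D2 : G → Matrix ι ι ℂ)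
    (h1 : ∀ h, s h = 1 → D1 h ∈ Matrix.unitaryGroup ι ℂ)
    (h2 : ∀ h, s h = 1 → D2 h ∈ Matrix.unitaryGroup ι ℂ)
    (X : Matrix ι ι ℂ) (hX : ∀ h, s h = 1 → D2 h * X = X * D1 h) :
    ∀ h, s h = 1 → D1 h * star X = star X * D2 h := by
  intro h hh
  have e1 := congrArg star (hX h hh)
  rw [StarMul.star_mul, StarMul.star_mul] at e1
  have k2 : star (D2 h) * D2 h = 1 := Matrix.mem_unitaryGroup_iff'.mp (h2 h hh)
  have k1 : D1 h * star (D1 h) = 1 := Matrix.mem_unitaryGroup_iff.mp (h1 h hh)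
  calc D1 h * star X = D1 h * (star X * (star (D2 h) * D2 h)) := by rw [k2, mul_one]
    _ = D1 h * (star X * star (D2 h)) * D2 h := by noncomm_ring
    _ = D1 h * (star (D1 h) * star X) * D2 h := by rw [e1]
    _ = (D1 h * star (D1 h)) * (star X * D2 h) := by noncomm_ring
    _ = star X * D2 h := by rw [k1, one_mul]

end Schur


/-- standard (canonical) form of a type-III (complex, norm `R = 2`)
irreducible unitary projective co-representation: it is equivalent to `U` with
`U(h) = diag(D(h), conj(E(h)))` for `h ∈ H` and `U(T0) = [[0, ω(T0,T0)·D(T0²)],[I,0]]`. -/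
theorem typeIII_standard_form {G : Type*} [Group G] [Fintype G] [DecidableEq G]
    (s : G →* ℤˣ) (hs : Function.Surjective s)
    (T0 : G) (hT0 : s T0 = -1)
    {n : ℕ}
    (M : G → Matrix (Fin n) (Fin n) ℂ) (ω : G → G → ℂ)
    (hM : IsUnitaryCoRep s M ω) (hirr : IrreducibleCoRep s M)
    (hone : ω 1 1 = 1)
    (hrestr : ∃ (m' : ℕ) (e : Fin n ≃ (Fin m' ⊕ Fin m'))
      (S : Matrix (Fin n) (Fin n) ℂ) (D1 D2 : G → Matrix (Fin m') (Fin m') ℂ),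
      S ∈ Matrix.unitaryGroup (Fin n) ℂ ∧
      (∀ h, s h = 1 →
        S * M h * star S = (Matrix.fromBlocks (D1 h) 0 0 (D2 h)).submatrix e e) ∧
      IsProjRepOnH s D1 ω ∧ IsProjRepOnH s D2 ω ∧
      IrreducibleOnH s D1 ∧ IrreducibleOnH s D2 ∧
      ¬ UnitEquivOnH s D1 D2) :
    ∃ (m : ℕ) (D : G → Matrix (Fin m) (Fin m) ℂ),
      IsProjRepOnH s D ω ∧ IrreducibleOnH s D ∧
      ∃ U : G → Matrix (Fin m ⊕ Fin m) (Fin m ⊕ Fin m) ℂ,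
        IsUnitaryCoRep s U ω ∧
        CoRepEquiv s M U ∧
        (∀ h, s h = 1 → U h = Matrix.fromBlocks (D h) 0 0
          ((Estd ω T0 D h).map (starRingEnd ℂ))) ∧
        U T0 = Matrix.fromBlocks 0 (ω T0 T0 • D (T0 * T0)) 1 0 := by
  obtain ⟨m, e, S, D1, D2, hSu, hSblock, hD1, hD2, hirr1, hirr2, hneq⟩ := hrestr
  -- conjugated co-representation N over Fin m ⊕ Fin m
  set S₀ : Matrix (Fin m ⊕ Fin m) (Fin m ⊕ Fin m) ℂ := S.submatrix e.symm e.symm with hS₀def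
  have hS₀u : S₀ ∈ Matrix.unitaryGroup (Fin m ⊕ Fin m) ℂ := by
    rw [Matrix.mem_unitaryGroup_iff']
    show star S₀ * S₀ = 1
    rw [hS₀def, Matrix.star_eq_conjTranspose, Matrix.conjTranspose_submatrix,
      ← Matrix.star_eq_conjTranspose, Matrix.submatrix_mul_equiv,
      Matrix.mem_unitaryGroup_iff'.mp hSu, Matrix.submatrix_one_equiv]
  set N : G → Matrix (Fin m ⊕ Fin m) (Fin m ⊕ Fin m) ℂ :=
    fun g => S₀ * (M g).submatrix e.symm e.symm * star (mconj (s g) S₀) with hNdef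
  have hNcorep : IsUnitaryCoRep s N ω :=
    corep_conj s (fun g => (M g).submatrix e.symm e.symm) ω
      (corep_reindex s M ω hM e.symm) S₀ hS₀u
  have hNirr : IrreducibleCoRep s N := irr_transport s M hirr e S₀ hS₀u
  -- block-diagonal form on H
  have hNh : ∀ h, s h = 1 → N h = Matrix.fromBlocks (D1 h) 0 0 (D2 h) := by
    intro h hh
    have : N h = S₀ * (M h).submatrix e.symm e.symm * star S₀ := by
      rw [hNdef]; simp only []; rw [hh, mconj_id]
    rw [this, hS₀def, Matrix.star_eq_conjTranspose, Matrix.conjTranspose_submatrix,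
      ← Matrix.star_eq_conjTranspose, Matrix.submatrix_mul_equiv,
      Matrix.submatrix_mul_equiv, hSblock h hh, Matrix.submatrix_submatrix,
      Equiv.self_comp_symm, Matrix.submatrix_id_id]
  -- notation for the blocks of N T0
  set T : Matrix (Fin m ⊕ Fin m) (Fin m ⊕ Fin m) ℂ := N T0 with hTdef
  set A := T.toBlocks₁₁ with hAdef
  set B := T.toBlocks₁₂ with hBdef
  set C := T.toBlocks₂₁ with hCdef
  set Dm := T.toBlocks₂₂ with hDmdef
  have hT : T = Matrix.fromBlocks A B C Dm := (Matrix.fromBlocks_toBlocks T).symm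
  -- unitarity of T
  have hTu1 : star T * T = 1 := Matrix.mem_unitaryGroup_iff'.mp (hNcorep.unitary T0)
  have hTu2 : T * star T = 1 := Matrix.mem_unitaryGroup_iff.mp (hNcorep.unitary T0)
  -- the partner representations
  set E1 : G → Matrix (Fin m) (Fin m) ℂ :=
    fun h => (ω h T0 / ω T0 (T0⁻¹ * h * T0)) • (D1 (T0⁻¹ * h * T0)).map (starRingEnd ℂ)
    with hE1def
  set E2 : G → Matrix (Fin m) (Fin m) ℂ :=
    fun h => (ω h T0 / ω T0 (T0⁻¹ * h * T0)) • (D2 (T0⁻¹ * h * T0)).map (starRingEnd ℂ)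
    with hE2def
  have hkk : ∀ h : G, s h = 1 → s (T0⁻¹ * h * T0) = 1 := by
    intro h hh
    rw [MonoidHom.map_mul, MonoidHom.map_mul, MonoidHom.map_inv, hT0, hh]
    decide
  have homega0 : ∀ g1 g2, ω g1 g2 ≠ 0 := by
    intro g1 g2 h0
    have := hM.omega_norm g1 g2
    rw [h0] at this
    simp at this
  -- the intertwining relations for the blocks of T
  have hblocks : ∀ h : G, s h = 1 →
      D1 h * A = A * E1 h ∧ D1 h * B = B * E2 h ∧
      D2 h * C = C * E1 h ∧ D2 h * Dm = Dm * E2 h := by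
    intro h hh
    set k := T0⁻¹ * h * T0 with hkdef
    have hk : s k = 1 := hkk h hh
    have e1 := hNcorep.mul_eq h T0
    rw [hh, mconj_id] at e1
    have e2 := hNcorep.mul_eq T0 k
    rw [hT0, mconj_neg] at e2
    have hT0k : T0 * k = h * T0 := by rw [hkdef]; group
    rw [hT0k] at e2
    -- N h * T = (ω h T0 / ω T0 k) • (T * (N k).map conj)
    have key : N h * T = (ω h T0 / ω T0 k) • (T * (N k).map (starRingEnd ℂ)) := by
      rw [← hTdef] at e1 e2
      have hNhT0 : N (h * T0) = (ω T0 k)⁻¹ • (T * (N k).map (starRingEnd ℂ)) := by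
        rw [e2, smul_smul, inv_mul_cancel₀ (homega0 T0 k), one_smul]
      rw [e1, hNhT0, smul_smul, ← div_eq_mul_inv]
    rw [hNh h hh, hNh k hk, hT] at key
    rw [Matrix.fromBlocks_map, Matrix.fromBlocks_multiply, Matrix.fromBlocks_multiply] at key
    have hz : (0 : Matrix (Fin m) (Fin m) ℂ).map (starRingEnd ℂ) = 0 := by
      ext i j; simp
    rw [hz] at key
    simp only [Matrix.mul_zero, Matrix.zero_mul, add_zero, zero_add,
      Matrix.fromBlocks_smul] at key
    have h11 := congrArg Matrix.toBlocks₁₁ key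
    have h12 := congrArg Matrix.toBlocks₁₂ key
    have h21 := congrArg Matrix.toBlocks₂₁ key
    have h22 := congrArg Matrix.toBlocks₂₂ key
    simp only [Matrix.toBlocks_fromBlocks₁₁, Matrix.toBlocks_fromBlocks₁₂,
      Matrix.toBlocks_fromBlocks₂₁, Matrix.toBlocks_fromBlocks₂₂] at h11 h12 h21 h22
    refine ⟨?_, ?_, ?_, ?_⟩
    · rw [h11, hE1def]; simp only []; rw [mul_smul_comm]
    · rw [h12, hE2def]; simp only []; rw [mul_smul_comm]
    · rw [h21, hE1def]; simp only []; rw [mul_smul_comm]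
    · rw [h22, hE2def]; simp only []; rw [mul_smul_comm]
  -- unitarity block relations
  have hTblocks : star A * A + star C * C = 1 ∧ star A * B + star C * Dm = 0 ∧
      A * star A + B * star B = 1 := by
    have h1 : Matrix.fromBlocks (star A * A + star C * C) (star A * B + star C * Dm)
        (star B * A + star Dm * C) (star B * B + star Dm * Dm)
        = Matrix.fromBlocks 1 0 0 1 := by
      rw [Matrix.fromBlocks_one, ← hTu1, hT,
        Matrix.star_eq_conjTranspose (Matrix.fromBlocks A B C Dm),
        Matrix.fromBlocks_conjTranspose, Matrix.fromBlocks_multiply]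
      rfl
    have h2 : Matrix.fromBlocks (A * star A + B * star B) (A * star C + B * star Dm)
        (C * star A + Dm * star B) (C * star C + Dm * star Dm)
        = Matrix.fromBlocks 1 0 0 1 := by
      rw [Matrix.fromBlocks_one, ← hTu2, hT,
        Matrix.star_eq_conjTranspose (Matrix.fromBlocks A B C Dm),
        Matrix.fromBlocks_conjTranspose, Matrix.fromBlocks_multiply]
      rfl
    refine ⟨?_, ?_, ?_⟩
    · have := congrArg Matrix.toBlocks₁₁ h1
      simpa only [Matrix.toBlocks_fromBlocks₁₁] using this
    · have := congrArg Matrix.toBlocks₁₂ h1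
      simpa only [Matrix.toBlocks_fromBlocks₁₂] using this
    · have := congrArg Matrix.toBlocks₁₁ h2
      simpa only [Matrix.toBlocks_fromBlocks₁₁] using this
  -- A must vanish
  have hA0 : A = 0 := by
    by_contra hA0
    have hmne : Nonempty (Fin m) := by
      by_contra hempty
      have : IsEmpty (Fin m) := not_nonempty_iff.mp hempty
      exact hA0 (Subsingleton.elim _ _)
    have hAU : IsUnit A := schur_inv s D1 E1 hirr1 A (fun h hh => (hblocks h hh).1) hA0
    by_cases hC0 : C = 0
    · -- C = 0 : then B = 0 and N is block diagonal, contradicting irreducibility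
      have hAA : star A * A = 1 := by
        have h1 := hTblocks.1
        rw [hC0] at h1
        simpa using h1
      have hAA2 : A * star A = 1 := mul_eq_one_comm.mp hAA
      have hBB : B * star B = 0 := by
        have h2 := hTblocks.2.2
        rw [hAA2] at h2
        have := congrArg (fun Z => Z - (1 : Matrix (Fin m) (Fin m) ℂ)) h2
        simpa using this
      have hB0 : B = 0 := self_mul_star_eq_zero hBB
      have hTdiag : T = Matrix.fromBlocks A 0 0 Dm := by rw [hT, hB0, hC0]
      have hdiag : ∀ g : G, ∃ P Q, N g = Matrix.fromBlocks P 0 0 Q := by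
        intro g
        rcases Int.units_eq_one_or (s g) with hg | hg
        · exact ⟨D1 g, D2 g, hNh g hg⟩
        · have hh' : s (g * T0⁻¹) = 1 := by
            rw [MonoidHom.map_mul, MonoidHom.map_inv, hg, hT0]; decide
          have e1 := hNcorep.mul_eq (g * T0⁻¹) T0
          rw [hh', mconj_id, ← hTdef] at e1
          have hgg : g * T0⁻¹ * T0 = g := by group
          rw [hgg] at e1
          refine ⟨(ω (g * T0⁻¹) T0)⁻¹ • (D1 (g * T0⁻¹) * A),
            (ω (g * T0⁻¹) T0)⁻¹ • (D2 (g * T0⁻¹) * Dm), ?_⟩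
          have hNg : N g = (ω (g * T0⁻¹) T0)⁻¹ • (N (g * T0⁻¹) * T) := by
            rw [e1, smul_smul, inv_mul_cancel₀ (homega0 _ _), one_smul]
          rw [hNg, hNh _ hh', hTdiag, Matrix.fromBlocks_multiply]
          simp only [Matrix.mul_zero, Matrix.zero_mul, add_zero, zero_add,
            Matrix.fromBlocks_smul, smul_zero]
      set W : Submodule ℂ ((Fin m ⊕ Fin m) → ℂ) :=
        LinearMap.ker (LinearMap.funLeft ℂ ℂ (Sum.inr : Fin m → Fin m ⊕ Fin m)) with hWdef
      have hmem : ∀ v : (Fin m ⊕ Fin m) → ℂ, v ∈ W ↔ v ∘ Sum.inr = 0 := by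
        intro v; rw [hWdef, LinearMap.mem_ker]; rfl
      have hWinv : InvariantSub s N W := by
        intro g v hv
        rw [hmem] at hv ⊢
        obtain ⟨P, Q, hPQ⟩ := hdiag g
        unfold rho
        rw [hPQ]
        have hv' : vconj (s g) v ∘ Sum.inr = 0 := by
          rw [← vconj_comp, hv, vconj_zero]
        rw [Matrix.fromBlocks_mulVec]
        funext i
        show Sum.elim _ _ (Sum.inr i) = 0
        rw [Sum.elim_inr, hv']
        simp
      have hW1 : W ≠ ⊥ := by
        intro hbot
        have hin : (Sum.elim (fun _ => (1:ℂ)) 0 : (Fin m ⊕ Fin m) → ℂ) ∈ W := by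
          rw [hmem]; rfl
        rw [hbot, Submodule.mem_bot] at hin
        have := congrFun hin (Sum.inl (Classical.arbitrary (Fin m)))
        simp at this
      have hW2 : W ≠ ⊤ := by
        intro htop
        have hin : (Sum.elim 0 (fun _ => (1:ℂ)) : (Fin m ⊕ Fin m) → ℂ) ∈ W := by
          rw [htop]; trivial
        rw [hmem] at hin
        have := congrFun hin (Classical.arbitrary (Fin m))
        simp at this
      rcases hNirr W hWinv with hcase | hcase
      · exact hW1 hcase
      · exact hW2 hcase
    · -- C ≠ 0 : build a unitary equivalence between D1 and D2, contradiction
      have hCU : IsUnit C := schur_inv s D2 E1 hirr2 C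
        (fun h hh => (hblocks h hh).2.2.1) hC0
      have hAdet : IsUnit A.det := (Matrix.isUnit_iff_isUnit_det A).mp hAU
      have hAinv : A⁻¹ * A = 1 := Matrix.nonsing_inv_mul A hAdet
      have hAinv2 : A * A⁻¹ = 1 := Matrix.mul_nonsing_inv A hAdet
      set X := C * A⁻¹ with hXdef
      have hXint : ∀ h, s h = 1 → D2 h * X = X * D1 h := by
        intro h hh
        have h1 := (hblocks h hh).1
        have h2 := (hblocks h hh).2.2.1
        have hAE : A⁻¹ * D1 h = E1 h * A⁻¹ := by
          calc A⁻¹ * D1 h = A⁻¹ * D1 h * (A * A⁻¹) := by rw [hAinv2, mul_one]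
            _ = A⁻¹ * (D1 h * A) * A⁻¹ := by noncomm_ring
            _ = A⁻¹ * (A * E1 h) * A⁻¹ := by rw [h1]
            _ = (A⁻¹ * A) * (E1 h * A⁻¹) := by noncomm_ring
            _ = E1 h * A⁻¹ := by rw [hAinv, one_mul]
        calc D2 h * (C * A⁻¹) = (D2 h * C) * A⁻¹ := by noncomm_ring
          _ = C * (E1 h * A⁻¹) := by rw [h2]; noncomm_ring
          _ = C * (A⁻¹ * D1 h) := by rw [hAE]
          _ = (C * A⁻¹) * D1 h := by noncomm_ring
      have hXU : IsUnit X := by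
        refine hCU.mul ?_
        exact (Matrix.isUnit_iff_isUnit_det _).2 (Matrix.isUnit_det_of_right_inverse hAinv)
      have hXstar := intertwiner_star s D1 D2 hD1.1 hD2.1 X hXint
      have hcommX : ∀ h, s h = 1 → D1 h * (star X * X) = (star X * X) * D1 h := by
        intro h hh
        calc D1 h * (star X * X) = (D1 h * star X) * X := by noncomm_ring
          _ = (star X * D2 h) * X := by rw [hXstar h hh]
          _ = star X * (D2 h * X) := by noncomm_ring
          _ = star X * (X * D1 h) := by rw [hXint h hh]
          _ = (star X * X) * D1 h := by noncomm_ring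
      obtain ⟨c, hc⟩ := schur_scalar s D1 hirr1 (star X * X) hcommX
      haveI : Nonempty (Fin m) := hmne
      set i0 : Fin m := Classical.arbitrary (Fin m) with hi0
      set t : ℝ := ∑ j, Complex.normSq (X j i0) with htdef
      have hct : c = (t : ℂ) := by
        have h00 : (c • (1 : Matrix (Fin m) (Fin m) ℂ)) i0 i0 = (star X * X) i0 i0 := by
          rw [hc]
        rw [Matrix.smul_apply, Matrix.one_apply_eq, smul_eq_mul, mul_one,
          Matrix.mul_apply] at h00
        have hterm : ∀ j, (star X) i0 j * X j i0 = ((Complex.normSq (X j i0) : ℝ) : ℂ) := by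
          intro j
          rw [Matrix.star_apply, Complex.star_def,
            mul_comm ((starRingEnd ℂ) (X j i0)) (X j i0), Complex.mul_conj]
        rw [Finset.sum_congr rfl (fun j _ => hterm j)] at h00
        rw [h00, htdef]
        push_cast
        rfl
      have ht0 : 0 ≤ t := Finset.sum_nonneg fun j _ => Complex.normSq_nonneg _
      have htne : t ≠ 0 := by
        intro h0
        have hXX : star X * X = 0 := by
          rw [hc, hct, h0]
          simp
        have hXz : X = 0 := star_mul_self_eq_zero hXX
        rw [hXz, isUnit_zero_iff] at hXU
        have h01 : (0 : Matrix (Fin m) (Fin m) ℂ) i0 i0 = (1 : Matrix (Fin m) (Fin m) ℂ) i0 i0 := by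
          rw [hXU]
        simp [Matrix.one_apply_eq] at h01
      set a : ℂ := ((Real.sqrt t : ℝ) : ℂ)⁻¹ with hadef
      set Wm := a • X with hWmdef
      have hWu : star Wm * Wm = 1 := by
        rw [hWmdef, star_smul, Matrix.smul_mul, Matrix.mul_smul, smul_smul, hc, hct, smul_smul]
        have hkey : star a * a * (t : ℂ) = 1 := by
          have hs : star a = a := by
            rw [hadef, star_inv₀, Complex.star_def, Complex.conj_ofReal]
          rw [hs, hadef, ← mul_inv, ← Complex.ofReal_mul, Real.mul_self_sqrt ht0]
          exact inv_mul_cancel₀ (by exact_mod_cast htne)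
        rw [hkey, one_smul]
      have hWmem : Wm ∈ Matrix.unitaryGroup (Fin m) ℂ := Matrix.mem_unitaryGroup_iff'.mpr hWu
      apply hneq
      refine ⟨Wm, hWmem, ?_⟩
      intro h hh
      have h1 : D2 h * Wm = Wm * D1 h := by
        rw [hWmdef, Matrix.mul_smul, hXint h hh, Matrix.smul_mul]
      have hWW : Wm * star Wm = 1 := Matrix.mem_unitaryGroup_iff.mp hWmem
      calc D2 h = D2 h * (Wm * star Wm) := by rw [hWW, mul_one]
        _ = (D2 h * Wm) * star Wm := by noncomm_ring
        _ = Wm * D1 h * star Wm := by rw [h1]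
  -- with A = 0 : C, B unitary and Dm = 0
  have hCC : star C * C = 1 := by
    have h1 := hTblocks.1
    rw [hA0] at h1
    simpa using h1
  have hCC2 : C * star C = 1 := mul_eq_one_comm.mp hCC
  have hDm0 : Dm = 0 := by
    have h12 := hTblocks.2.1
    rw [hA0] at h12
    have hCD : star C * Dm = 0 := by simpa using h12
    calc Dm = (C * star C) * Dm := by rw [hCC2, one_mul]
      _ = C * (star C * Dm) := by noncomm_ring
      _ = 0 := by rw [hCD, mul_zero]
  have hTform : T = Matrix.fromBlocks 0 B C 0 := by rw [hT, hA0, hDm0]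
  set V : Matrix (Fin m ⊕ Fin m) (Fin m ⊕ Fin m) ℂ := Matrix.fromBlocks 1 0 0 (star C)
    with hVdef
  have hVstar : star V = Matrix.fromBlocks 1 0 0 C := by
    rw [hVdef, Matrix.star_eq_conjTranspose, Matrix.fromBlocks_conjTranspose,
      Matrix.conjTranspose_one, Matrix.conjTranspose_zero,
      ← Matrix.star_eq_conjTranspose, star_star]
  have hVu : V ∈ Matrix.unitaryGroup (Fin m ⊕ Fin m) ℂ := by
    rw [Matrix.mem_unitaryGroup_iff', hVstar, hVdef, Matrix.fromBlocks_multiply]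
    simp only [Matrix.mul_zero, Matrix.zero_mul, Matrix.mul_one, Matrix.one_mul,
      add_zero, zero_add, one_mul, mul_one, zero_mul, mul_zero, hCC2]
    exact Matrix.fromBlocks_one
  set Stot := V * S₀ with hStotdef
  have hStotu : Stot ∈ Matrix.unitaryGroup (Fin m ⊕ Fin m) ℂ := Submonoid.mul_mem _ hVu hS₀u
  set U : G → Matrix (Fin m ⊕ Fin m) (Fin m ⊕ Fin m) ℂ :=
    fun g => Stot * (M g).submatrix e.symm e.symm * star (mconj (s g) Stot) with hUdef
  have hUcorep : IsUnitaryCoRep s U ω :=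
    corep_conj s (fun g => (M g).submatrix e.symm e.symm) ω
      (corep_reindex s M ω hM e.symm) Stot hStotu
  have hUN : ∀ g, U g = V * N g * star (mconj (s g) V) := by
    intro g
    rw [hUdef]
    simp only []
    rw [hNdef]
    simp only []
    rw [hStotdef, mconj_mul, StarMul.star_mul]
    noncomm_ring
  have hUh : ∀ h, s h = 1 → U h = Matrix.fromBlocks (D1 h) 0 0 (E1 h) := by
    intro h hh
    rw [hUN, hh, mconj_id, hNh h hh, hVstar, hVdef, Matrix.fromBlocks_multiply,
      Matrix.fromBlocks_multiply]
    simp only [Matrix.mul_zero, Matrix.zero_mul, Matrix.mul_one, Matrix.one_mul,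
      add_zero, zero_add, one_mul, mul_one, zero_mul, mul_zero]
    have hblk : star C * D2 h * C = E1 h := by
      calc star C * D2 h * C = star C * (C * E1 h) := by
            rw [mul_assoc, (hblocks h hh).2.2.1]
        _ = (star C * C) * E1 h := by noncomm_ring
        _ = E1 h := by rw [hCC, one_mul]
    rw [hblk]
  have hUT0 : U T0 = Matrix.fromBlocks 0 (B * C.map (starRingEnd ℂ)) 1 0 := by
    rw [hUN, hT0, ← hTdef, hTform, ← mconj_star, mconj_neg, hVstar, hVdef,
      Matrix.fromBlocks_map, matmap_one, matmap_zero,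
      Matrix.fromBlocks_multiply, Matrix.fromBlocks_multiply]
    simp only [Matrix.mul_zero, Matrix.zero_mul, Matrix.mul_one, Matrix.one_mul,
      add_zero, zero_add, one_mul, mul_one, zero_mul, mul_zero, hCC]
  have hsT2 : s (T0 * T0) = 1 := by rw [MonoidHom.map_mul, hT0]; decide
  have hmul := hUcorep.mul_eq T0 T0
  rw [hT0, mconj_neg, hUT0, hUh _ hsT2, Matrix.fromBlocks_map, matmap_one, matmap_zero,
    Matrix.fromBlocks_multiply, Matrix.fromBlocks_smul] at hmul
  simp only [Matrix.mul_zero, Matrix.zero_mul, Matrix.mul_one, Matrix.one_mul,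
    add_zero, zero_add, one_mul, mul_one, zero_mul, mul_zero, smul_zero] at hmul
  have hR := congrArg Matrix.toBlocks₁₁ hmul
  simp only [Matrix.toBlocks_fromBlocks₁₁] at hR
  -- hR : B * C.map conj = ω T0 T0 • D1 (T0 * T0)
  refine ⟨m, D1, hD1, hirr1, U, hUcorep, ⟨e, Stot, hStotu, ?_⟩, ?_, ?_⟩
  · intro g
    rw [Matrix.inv_eq_left_inv (star_mconj_mul_self hStotu)]
  · intro h hh
    have hE : E1 h = (Estd ω T0 D1 h).map (starRingEnd ℂ) := by
      rw [hE1def]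
      simp only []
      unfold Estd
      ext i j
      simp only [Matrix.smul_apply, Matrix.map_apply, smul_eq_mul, _root_.map_mul,
        Complex.conj_conj]
    rw [hUh h hh, hE]
  · rw [hUT0, hR]

end
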